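/- Let b, c, p₀, q₀, A₁, A₃, A₄ ∈ ℚ with b ≠ 0, p₀·q₀ ≠ 0, and set m = p₀² + b·q₀² + c. Assume m ≠ 0, m ≠ c, A₁⁴ − 256·A₄·(m − c)²m⁴ ≠ 0, define A₂ = (A₁⁶ + 64(m − c)²m²A₁³A₃ + 256(2c − 3m)(m − c)²m³A₁²A₄ − 512(m − c)³m⁵A₃²)/(8m(m − c)(A₁⁴ − 256A₄(m − c)²m⁴)), and assume the polynomial f₂(X) = A₄X⁴ + A₃X³ + A₂X² + A₁X + m² has nonzero discriminant. Set C₄ = A₁⁴ − 256(m − c)²m⁴A₄, C₂ = 2b(A₁⁶ − 32(m − c)²m²(A₃A₁³ + 8c·m·A₄A₁² − 8(m − c)m³A₃²)), and C₀ = b²(A₁⁸ − 64(m − c)²m²A₁⁵A₃ + 512(m − c)²m³(m − 2c)A₁⁴A₄ + 1024(m − c)³m⁵A₁²A₃² − 16384(m − c)⁴m⁶A₄(A₁A₃ − 4A₄m²)). If the set of rational points (U, V) ∈ ℚ² satisfying V² = 2b·m·(m − c)·(256A₄(m − c)²m⁴ − A₁⁴)·(C₄U⁴ + C₂U² + C₀)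 is infinite, then the set of X ∈ ℚ for which there exist p, q ∈ ℚ with (p² + b·q² + c)² = f₂(X) is infinite. -/

import Mathlib

open Polynomial

private lemma sq_fin (r : ℚ) : {v : ℚ | v ^ 2 = r}.Finite := by
  rcases Set.eq_empty_or_nonempty {v : ℚ | v ^ 2 = r} with h | ⟨v₀, hv₀⟩
  · rw [h]; exact Set.finite_empty
  · apply Set.Finite.subset ((Set.finite_singleton v₀).insert (-v₀))
    intro v hv
    have hv' : v ^ 2 = r := hv
    have hv₀' : v₀ ^ 2 = r := hv₀
    have h2 : (v - v₀) * (v + v₀) = 0 := by linear_combination hv' - hv₀'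
    rcases mul_eq_zero.mp h2 with h3 | h3
    · right; rw [Set.mem_singleton_iff]; linarith
    · left; linarith

private lemma quartic_fin (c4 c3 c2 c1 c0 : ℚ) (h : c4 ≠ 0) :
    {x : ℚ | c4 * x ^ 4 + c3 * x ^ 3 + c2 * x ^ 2 + c1 * x + c0 = 0}.Finite := by
  have hp0 : (C c4 * X ^ 4 + C c3 * X ^ 3 + C c2 * X ^ 2 + C c1 * X + C c0 : ℚ[X]) ≠ 0 := by
    intro h0
    apply h
    have := congrArg (fun q : ℚ[X] => q.coeff 4) h0
    simpa [coeff_add, coeff_C_mul, coeff_X_pow, coeff_C, coeff_X] using this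
  apply Set.Finite.subset (Polynomial.finite_setOf_isRoot hp0)
  intro x hx
  have hx' : c4 * x ^ 4 + c3 * x ^ 3 + c2 * x ^ 2 + c1 * x + c0 = 0 := hx
  simp only [Set.mem_setOf_eq, IsRoot, eval_add, eval_mul, eval_pow, eval_C, eval_X]
  linear_combination hx'

private lemma quadratic_fin (c2 c1 c0 : ℚ) (h : c2 ≠ 0) :
    {x : ℚ | c2 * x ^ 2 + c1 * x + c0 = 0}.Finite := by
  have hp0 : (C c2 * X ^ 2 + C c1 * X + C c0 : ℚ[X]) ≠ 0 := by
    intro h0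
    apply h
    have := congrArg (fun q : ℚ[X] => q.coeff 2) h0
    simpa [coeff_add, coeff_C_mul, coeff_X_pow, coeff_C, coeff_X] using this
  apply Set.Finite.subset (Polynomial.finite_setOf_isRoot hp0)
  intro x hx
  have hx' : c2 * x ^ 2 + c1 * x + c0 = 0 := hx
  simp only [Set.mem_setOf_eq, IsRoot, eval_add, eval_mul, eval_pow, eval_C, eval_X]
  linear_combination hx'

private lemma pair_fin (R : ℚ → ℚ) (T : Set (ℚ × ℚ)) (hT : ∀ P ∈ T, P.2 ^ 2 = R P.1)
    (h1 : (Prod.fst '' T).Finite) : T.Finite := by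
  apply Set.Finite.subset
    (Set.Finite.biUnion h1 (fun u _ => (Set.finite_singleton u).prod (sq_fin (R u))))
  intro P hP
  apply Set.mem_biUnion (Set.mem_image_of_mem Prod.fst hP)
  exact ⟨rfl, hT P hP⟩

private lemma core (b c p0 q0 A1 A2 A3 A4 m s t QQ w X : ℚ) (hm0 : m ≠ 0)
    (hm : m = p0 ^ 2 + b * q0 ^ 2 + c)
    (hQ : t ^ 2 + b * s ^ 2 = QQ)
    (hL : 4 * m * (p0 * t + b * q0 * s) = A1)
    (ha : A4 - QQ ^ 2 ≠ 0)
    (hX : 4 * m * (A4 - QQ ^ 2) * X = 2 * A1 * QQ - 2 * A3 * m + 2 * m * w)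
    (hw : 4 * m ^ 2 * w ^ 2 = (2 * A1 * QQ - 2 * A3 * m) ^ 2
      - 4 * (A4 - QQ ^ 2) * (4 * m ^ 2 * A2 - A1 ^ 2 - 8 * m ^ 3 * QQ)) :
    ((p0 + t * X) ^ 2 + b * (q0 + s * X) ^ 2 + c) ^ 2
      = A4 * X ^ 4 + A3 * X ^ 3 + A2 * X ^ 2 + A1 * X + m ^ 2 := by
  have hkey0 : (4 * (A4 - QQ ^ 2)) * (4 * m ^ 2 * (A4 - QQ ^ 2) * X ^ 2
      - (4 * m * A1 * QQ - 4 * m ^ 2 * A3) * X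
      + (4 * m ^ 2 * A2 - A1 ^ 2 - 8 * m ^ 3 * QQ)) = 0 := by
    linear_combination (4 * m * (A4 - QQ ^ 2) * X + 2 * m * w
      - (2 * A1 * QQ - 2 * A3 * m)) * hX + hw
  have key : 4 * m ^ 2 * (A4 - QQ ^ 2) * X ^ 2 - (4 * m * A1 * QQ - 4 * m ^ 2 * A3) * X
      + (4 * m ^ 2 * A2 - A1 ^ 2 - 8 * m ^ 3 * QQ) = 0 := by
    rcases mul_eq_zero.mp hkey0 with h | h
    · exact absurd (by linarith : A4 - QQ ^ 2 = 0) ha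
    · exact h
  have inner2 : 2 * m * ((p0 + t * X) ^ 2 + b * (q0 + s * X) ^ 2 + c)
      = 2 * m ^ 2 + A1 * X + 2 * m * QQ * X ^ 2 := by
    linear_combination (2 * m * X ^ 2) * hQ + X * hL - 2 * m * hm
  have sq : (2 * m ^ 2 + A1 * X + 2 * m * QQ * X ^ 2) ^ 2
      = 4 * m ^ 2 * (A4 * X ^ 4 + A3 * X ^ 3 + A2 * X ^ 2 + A1 * X + m ^ 2) := by
    linear_combination (-X ^ 2) * key
  have final : (4 * m ^ 2) * (((p0 + t * X) ^ 2 + b * (q0 + s * X) ^ 2 + c) ^ 2)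
      = (4 * m ^ 2) * (A4 * X ^ 4 + A3 * X ^ 3 + A2 * X ^ 2 + A1 * X + m ^ 2) := by
    calc (4 * m ^ 2) * (((p0 + t * X) ^ 2 + b * (q0 + s * X) ^ 2 + c) ^ 2)
        = (2 * m * ((p0 + t * X) ^ 2 + b * (q0 + s * X) ^ 2 + c)) ^ 2 := by ring
      _ = (2 * m ^ 2 + A1 * X + 2 * m * QQ * X ^ 2) ^ 2 := by rw [inner2]
      _ = (4 * m ^ 2) * (A4 * X ^ 4 + A3 * X ^ 3 + A2 * X ^ 2 + A1 * X + m ^ 2) := sq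
  exact mul_left_cancel₀ (by positivity) final

private lemma big (b c A1 A2 A3 A4 m C4 C2 C0 U V : ℚ)
    (hb : b ≠ 0) (hm0 : m ≠ 0) (hmc : m ≠ c)
    (hA : A1 ^ 4 - 256 * A4 * (m - c) ^ 2 * m ^ 4 ≠ 0)
    (hA2 : A2 = (A1 ^ 6 + 64 * (m - c) ^ 2 * m ^ 2 * A1 ^ 3 * A3
        + 256 * (2 * c - 3 * m) * (m - c) ^ 2 * m ^ 3 * A1 ^ 2 * A4
        - 512 * (m - c) ^ 3 * m ^ 5 * A3 ^ 2)
      / (8 * m * (m - c) * (A1 ^ 4 - 256 * A4 * (m - c) ^ 2 * m ^ 4)))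
    (hC4 : C4 = A1 ^ 4 - 256 * (m - c) ^ 2 * m ^ 4 * A4)
    (hC2 : C2 = 2 * b * (A1 ^ 6 - 32 * (m - c) ^ 2 * m ^ 2 *
      (A3 * A1 ^ 3 + 8 * c * m * A4 * A1 ^ 2 - 8 * (m - c) * m ^ 3 * A3 ^ 2)))
    (hC0 : C0 = b ^ 2 * (A1 ^ 8 - 64 * (m - c) ^ 2 * m ^ 2 * A1 ^ 5 * A3
      + 512 * (m - c) ^ 2 * m ^ 3 * (m - 2 * c) * A1 ^ 4 * A4
      + 1024 * (m - c) ^ 3 * m ^ 5 * A1 ^ 2 * A3 ^ 2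
      - 16384 * (m - c) ^ 4 * m ^ 6 * A4 * (A1 * A3 - 4 * A4 * m ^ 2)))
    (hV : V ^ 2 = 2 * b * m * (m - c) * (256 * A4 * (m - c) ^ 2 * m ^ 4 - A1 ^ 4)
      * (C4 * U ^ 4 + C2 * U ^ 2 + C0)) :
    4 * m ^ 2 * (U * V / (32 * b ^ 2 * m ^ 3 * (m - c) ^ 2 * C4)) ^ 2
      = (2 * A1 * ((U ^ 2 + b * A1 ^ 2) / (16 * b * m ^ 2 * (m - c))) - 2 * A3 * m) ^ 2
        - 4 * (A4 - ((U ^ 2 + b * A1 ^ 2) / (16 * b * m ^ 2 * (m - c))) ^ 2)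
          * (4 * m ^ 2 * A2 - A1 ^ 2
            - 8 * m ^ 3 * ((U ^ 2 + b * A1 ^ 2) / (16 * b * m ^ 2 * (m - c)))) := by
  have hd : m - c ≠ 0 := sub_ne_zero.mpr hmc
  have hC4e : A1 ^ 4 - 256 * (m - c) ^ 2 * m ^ 4 * A4 ≠ 0 := fun h => hA (by linear_combination h)
  have hC4' : C4 = A1 ^ 4 - 256 * A4 * (m - c) ^ 2 * m ^ 4 := by rw [hC4]; ring
  generalize hD : A1 ^ 4 - 256 * A4 * (m - c) ^ 2 * m ^ 4 = D at hA hA2 hC4'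
  subst hA2 hC4' hC2 hC0
  conv_lhs => rw [div_pow, mul_pow]
  rw [hV]
  field_simp
  subst hD
  ring

set_option maxHeartbeats 2000000 in
theorem stmt_13 (b c p₀ q₀ A₁ A₃ A₄ m A₂ C₄ C₂ C₀ : ℚ)
    (hb : b ≠ 0) (hpq : p₀ * q₀ ≠ 0)
    (hm : m = p₀ ^ 2 + b * q₀ ^ 2 + c) (hm0 : m ≠ 0) (hmc : m ≠ c)
    (hA : A₁ ^ 4 - 256 * A₄ * (m - c) ^ 2 * m ^ 4 ≠ 0)
    (hA₂ : A₂ = (A₁ ^ 6 + 64 * (m - c) ^ 2 * m ^ 2 * A₁ ^ 3 * A₃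
        + 256 * (2 * c - 3 * m) * (m - c) ^ 2 * m ^ 3 * A₁ ^ 2 * A₄
        - 512 * (m - c) ^ 3 * m ^ 5 * A₃ ^ 2)
      / (8 * m * (m - c) * (A₁ ^ 4 - 256 * A₄ * (m - c) ^ 2 * m ^ 4)))
    (hdisc : (C A₄ * X ^ 4 + C A₃ * X ^ 3 + C A₂ * X ^ 2 + C A₁ * X
      + C (m ^ 2) : ℚ[X]).Separable)
    (hC₄ : C₄ = A₁ ^ 4 - 256 * (m - c) ^ 2 * m ^ 4 * A₄)
    (hC₂ : C₂ = 2 * b * (A₁ ^ 6 - 32 * (m - c) ^ 2 * m ^ 2 *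
      (A₃ * A₁ ^ 3 + 8 * c * m * A₄ * A₁ ^ 2 - 8 * (m - c) * m ^ 3 * A₃ ^ 2)))
    (hC₀ : C₀ = b ^ 2 * (A₁ ^ 8 - 64 * (m - c) ^ 2 * m ^ 2 * A₁ ^ 5 * A₃
      + 512 * (m - c) ^ 2 * m ^ 3 * (m - 2 * c) * A₁ ^ 4 * A₄
      + 1024 * (m - c) ^ 3 * m ^ 5 * A₁ ^ 2 * A₃ ^ 2
      - 16384 * (m - c) ^ 4 * m ^ 6 * A₄ * (A₁ * A₃ - 4 * A₄ * m ^ 2)))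
    (hinf : {P : ℚ × ℚ | P.2 ^ 2 = 2 * b * m * (m - c)
      * (256 * A₄ * (m - c) ^ 2 * m ^ 4 - A₁ ^ 4)
      * (C₄ * P.1 ^ 4 + C₂ * P.1 ^ 2 + C₀)}.Infinite) :
    {x : ℚ | ∃ p q : ℚ, (p ^ 2 + b * q ^ 2 + c) ^ 2 =
      A₄ * x ^ 4 + A₃ * x ^ 3 + A₂ * x ^ 2 + A₁ * x + m ^ 2}.Infinite := by
  have hp0 : p₀ ≠ 0 := left_ne_zero_of_mul hpq
  have hq0 : q₀ ≠ 0 := right_ne_zero_of_mul hpq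
  have hd : m - c ≠ 0 := sub_ne_zero.mpr hmc
  have hC4ne : C₄ ≠ 0 := by
    rw [hC₄]; intro h; exact hA (by linear_combination h)
  by_contra hfin
  rw [Set.not_infinite] at hfin
  -- cleared form of the basic quotient
  have hQc : ∀ u : ℚ, (16 * b * m ^ 2 * (m - c)) *
      ((u ^ 2 + b * A₁ ^ 2) / (16 * b * m ^ 2 * (m - c))) = u ^ 2 + b * A₁ ^ 2 := by
    intro u; field_simp
  -- the X-coordinate map
  set F : ℚ × ℚ → ℚ := fun P =>
    (2 * A₁ * ((P.1 ^ 2 + b * A₁ ^ 2) / (16 * b * m ^ 2 * (m - c))) - 2 * A₃ * m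
      + 2 * m * (P.1 * P.2 / (32 * b ^ 2 * m ^ 3 * (m - c) ^ 2 * C₄)))
    / (4 * m * (A₄ - ((P.1 ^ 2 + b * A₁ ^ 2) / (16 * b * m ^ 2 * (m - c))) ^ 2)) with hFdef
  set S : Set (ℚ × ℚ) := {P : ℚ × ℚ | P.2 ^ 2 = 2 * b * m * (m - c)
      * (256 * A₄ * (m - c) ^ 2 * m ^ 4 - A₁ ^ 4)
      * (C₄ * P.1 ^ 4 + C₂ * P.1 ^ 2 + C₀)} with hSdef
  set R : ℚ → ℚ := fun u => 2 * b * m * (m - c)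
      * (256 * A₄ * (m - c) ^ 2 * m ^ 4 - A₁ ^ 4)
      * (C₄ * u ^ 4 + C₂ * u ^ 2 + C₀) with hRdef
  have hSR : ∀ P ∈ S, P.2 ^ 2 = R P.1 := fun P hP => hP
  set B : Set (ℚ × ℚ) := {P : ℚ × ℚ | P ∈ S ∧
      A₄ - ((P.1 ^ 2 + b * A₁ ^ 2) / (16 * b * m ^ 2 * (m - c))) ^ 2 = 0} with hBdef
  have hBfin : B.Finite := by
    apply pair_fin R _ (fun P hP => hSR P hP.1)
    apply Set.Finite.subset (quartic_fin (-1) 0 (-2 * b * A₁ ^ 2) 0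
      (A₄ * (16 * b * m ^ 2 * (m - c)) ^ 2 - b ^ 2 * A₁ ^ 4) (by norm_num))
    rintro u ⟨P, hPB, rfl⟩
    have h2 := hPB.2
    simp only [Set.mem_setOf_eq]
    linear_combination ((16 * b * m ^ 2 * (m - c)) ^ 2) * h2
      + ((16 * b * m ^ 2 * (m - c)) * ((P.1 ^ 2 + b * A₁ ^ 2) / (16 * b * m ^ 2 * (m - c)))
        + (P.1 ^ 2 + b * A₁ ^ 2)) * hQc P.1
  have hS'inf : (S \ B).Infinite := hinf.diff hBfin
  -- cleared X equation
  have hXeq : ∀ P : ℚ × ℚ,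
      A₄ - ((P.1 ^ 2 + b * A₁ ^ 2) / (16 * b * m ^ 2 * (m - c))) ^ 2 ≠ 0 →
      4 * m * (A₄ - ((P.1 ^ 2 + b * A₁ ^ 2) / (16 * b * m ^ 2 * (m - c))) ^ 2) * F P
        = 2 * A₁ * ((P.1 ^ 2 + b * A₁ ^ 2) / (16 * b * m ^ 2 * (m - c))) - 2 * A₃ * m
          + 2 * m * (P.1 * P.2 / (32 * b ^ 2 * m ^ 3 * (m - c) ^ 2 * C₄)) := by
    intro P hPa
    simp only [hFdef]
    exact mul_div_cancel₀ _ (mul_ne_zero (mul_ne_zero (by norm_num) hm0) hPa)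
  -- the big identity per point
  have hw2 : ∀ P : ℚ × ℚ, P ∈ S →
      4 * m ^ 2 * (P.1 * P.2 / (32 * b ^ 2 * m ^ 3 * (m - c) ^ 2 * C₄)) ^ 2
        = (2 * A₁ * ((P.1 ^ 2 + b * A₁ ^ 2) / (16 * b * m ^ 2 * (m - c))) - 2 * A₃ * m) ^ 2
          - 4 * (A₄ - ((P.1 ^ 2 + b * A₁ ^ 2) / (16 * b * m ^ 2 * (m - c))) ^ 2)
            * (4 * m ^ 2 * A₂ - A₁ ^ 2
              - 8 * m ^ 3 * ((P.1 ^ 2 + b * A₁ ^ 2) / (16 * b * m ^ 2 * (m - c)))) := by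
    intro P hP
    exact big b c A₁ A₂ A₃ A₄ m C₄ C₂ C₀ P.1 P.2 hb hm0 hmc hA hA₂ hC₄ hC₂ hC₀ hP
  -- every good point maps into the target set
  have hmem : ∀ P ∈ S \ B, F P ∈ {x : ℚ | ∃ p q : ℚ, (p ^ 2 + b * q ^ 2 + c) ^ 2 =
      A₄ * x ^ 4 + A₃ * x ^ 3 + A₂ * x ^ 2 + A₁ * x + m ^ 2} := by
    rintro P ⟨hPS, hPB⟩
    have hPa : A₄ - ((P.1 ^ 2 + b * A₁ ^ 2) / (16 * b * m ^ 2 * (m - c))) ^ 2 ≠ 0 :=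
      fun h => hPB ⟨hPS, h⟩
    have ht : 4 * m * (m - c) * ((A₁ * p₀ - P.1 * q₀) / (4 * m * (m - c)))
        = A₁ * p₀ - P.1 * q₀ := by field_simp
    have hs : 4 * b * m * (m - c) * ((A₁ * q₀ * b + P.1 * p₀) / (4 * b * m * (m - c)))
        = A₁ * q₀ * b + P.1 * p₀ := by field_simp
    have hQ : ((A₁ * p₀ - P.1 * q₀) / (4 * m * (m - c))) ^ 2
        + b * ((A₁ * q₀ * b + P.1 * p₀) / (4 * b * m * (m - c))) ^ 2
        = (P.1 ^ 2 + b * A₁ ^ 2) / (16 * b * m ^ 2 * (m - c)) := by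
      apply mul_left_cancel₀ (show (16 * b * m ^ 2 * (m - c) ^ 2 : ℚ) ≠ 0 from
        mul_ne_zero (mul_ne_zero (mul_ne_zero (by norm_num) hb) (pow_ne_zero 2 hm0))
          (pow_ne_zero 2 hd))
      linear_combination (b * (4 * m * (m - c) * ((A₁ * p₀ - P.1 * q₀) / (4 * m * (m - c)))
          + (A₁ * p₀ - P.1 * q₀))) * ht
        + (4 * b * m * (m - c) * ((A₁ * q₀ * b + P.1 * p₀) / (4 * b * m * (m - c)))
          + (A₁ * q₀ * b + P.1 * p₀)) * hs
        - (m - c) * hQc P.1 - (P.1 ^ 2 + b * A₁ ^ 2) * hm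
    have hL : 4 * m * (p₀ * ((A₁ * p₀ - P.1 * q₀) / (4 * m * (m - c)))
        + b * q₀ * ((A₁ * q₀ * b + P.1 * p₀) / (4 * b * m * (m - c)))) = A₁ := by
      apply mul_left_cancel₀ (show (b * (m - c) : ℚ) ≠ 0 from mul_ne_zero hb hd)
      linear_combination (b * p₀) * ht + (b * q₀) * hs - (b * A₁) * hm
    exact ⟨p₀ + ((A₁ * p₀ - P.1 * q₀) / (4 * m * (m - c))) * F P,
      q₀ + ((A₁ * q₀ * b + P.1 * p₀) / (4 * b * m * (m - c))) * F P,
      core b c p₀ q₀ A₁ A₂ A₃ A₄ m _ _ _ _ (F P) hm0 hm hQ hL hPa (hXeq P hPa) (hw2 P hPS)⟩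
  -- fibers of F over the (finite) target set are finite
  have hfib : ∀ x : ℚ, {P : ℚ × ℚ | P ∈ S \ B ∧ F P = x}.Finite := by
    intro x
    apply pair_fin R _ (fun P hP => hSR P hP.1.1)
    have hroot : ∀ P : ℚ × ℚ, P ∈ S \ B → F P = x →
        (-4 * m ^ 2 * x ^ 2) * P.1 ^ 4 + 0 * P.1 ^ 3
          + (-8 * b * A₁ ^ 2 * m ^ 2 * x ^ 2 - 4 * m * A₁ * (16 * b * m ^ 2 * (m - c)) * x
            - 8 * m ^ 3 * (16 * b * m ^ 2 * (m - c))) * P.1 ^ 2 + 0 * P.1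
          + (4 * m ^ 2 * A₄ * (16 * b * m ^ 2 * (m - c)) ^ 2 * x ^ 2
            - 4 * m ^ 2 * x ^ 2 * b ^ 2 * A₁ ^ 4
            - 4 * m * A₁ * b * A₁ ^ 2 * (16 * b * m ^ 2 * (m - c)) * x
            + 4 * m ^ 2 * A₃ * (16 * b * m ^ 2 * (m - c)) ^ 2 * x
            + 4 * m ^ 2 * A₂ * (16 * b * m ^ 2 * (m - c)) ^ 2
            - A₁ ^ 2 * (16 * b * m ^ 2 * (m - c)) ^ 2
            - 8 * m ^ 3 * b * A₁ ^ 2 * (16 * b * m ^ 2 * (m - c))) = 0 := by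
      rintro P ⟨hPS, hPB⟩ hFx
      have hPa : A₄ - ((P.1 ^ 2 + b * A₁ ^ 2) / (16 * b * m ^ 2 * (m - c))) ^ 2 ≠ 0 :=
        fun h => hPB ⟨hPS, h⟩
      have hX := hXeq P hPa
      rw [hFx] at hX
      have hw := hw2 P hPS
      have hkey0 : (4 * (A₄ - ((P.1 ^ 2 + b * A₁ ^ 2) / (16 * b * m ^ 2 * (m - c))) ^ 2))
          * (4 * m ^ 2 * (A₄ - ((P.1 ^ 2 + b * A₁ ^ 2) / (16 * b * m ^ 2 * (m - c))) ^ 2) * x ^ 2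
            - (4 * m * A₁ * ((P.1 ^ 2 + b * A₁ ^ 2) / (16 * b * m ^ 2 * (m - c)))
              - 4 * m ^ 2 * A₃) * x
            + (4 * m ^ 2 * A₂ - A₁ ^ 2
              - 8 * m ^ 3 * ((P.1 ^ 2 + b * A₁ ^ 2) / (16 * b * m ^ 2 * (m - c))))) = 0 := by
        linear_combination (4 * m * (A₄ - ((P.1 ^ 2 + b * A₁ ^ 2)
            / (16 * b * m ^ 2 * (m - c))) ^ 2) * x
          + 2 * m * (P.1 * P.2 / (32 * b ^ 2 * m ^ 3 * (m - c) ^ 2 * C₄))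
          - (2 * A₁ * ((P.1 ^ 2 + b * A₁ ^ 2) / (16 * b * m ^ 2 * (m - c)))
            - 2 * A₃ * m)) * hX + hw
      have key : 4 * m ^ 2 * (A₄ - ((P.1 ^ 2 + b * A₁ ^ 2)
            / (16 * b * m ^ 2 * (m - c))) ^ 2) * x ^ 2
          - (4 * m * A₁ * ((P.1 ^ 2 + b * A₁ ^ 2) / (16 * b * m ^ 2 * (m - c)))
            - 4 * m ^ 2 * A₃) * x
          + (4 * m ^ 2 * A₂ - A₁ ^ 2
            - 8 * m ^ 3 * ((P.1 ^ 2 + b * A₁ ^ 2) / (16 * b * m ^ 2 * (m - c)))) = 0 := by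
        rcases mul_eq_zero.mp hkey0 with h | h
        · exact absurd (by linarith : A₄ - ((P.1 ^ 2 + b * A₁ ^ 2)
            / (16 * b * m ^ 2 * (m - c))) ^ 2 = 0) hPa
        · exact h
      linear_combination ((16 * b * m ^ 2 * (m - c)) ^ 2) * key
        + (4 * m ^ 2 * x ^ 2 * ((16 * b * m ^ 2 * (m - c)) * ((P.1 ^ 2 + b * A₁ ^ 2)
            / (16 * b * m ^ 2 * (m - c))) + (P.1 ^ 2 + b * A₁ ^ 2))
          + 4 * m * A₁ * x * (16 * b * m ^ 2 * (m - c))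
          + 8 * m ^ 3 * (16 * b * m ^ 2 * (m - c))) * hQc P.1
    by_cases hx0 : x = 0
    · apply Set.Finite.subset (quadratic_fin
        (-8 * m ^ 3 * (16 * b * m ^ 2 * (m - c))) 0
        (4 * m ^ 2 * A₂ * (16 * b * m ^ 2 * (m - c)) ^ 2
          - A₁ ^ 2 * (16 * b * m ^ 2 * (m - c)) ^ 2
          - 8 * m ^ 3 * b * A₁ ^ 2 * (16 * b * m ^ 2 * (m - c)))
        (mul_ne_zero (mul_ne_zero (by norm_num) (pow_ne_zero 3 hm0))
          (mul_ne_zero (mul_ne_zero (mul_ne_zero (by norm_num) hb) (pow_ne_zero 2 hm0)) hd)))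
      rintro u ⟨P, ⟨hPSB, hFx⟩, rfl⟩
      have := hroot P hPSB hFx
      rw [hx0] at this
      simp only [Set.mem_setOf_eq]
      linear_combination this
    · apply Set.Finite.subset (quartic_fin (-4 * m ^ 2 * x ^ 2) 0
        (-8 * b * A₁ ^ 2 * m ^ 2 * x ^ 2 - 4 * m * A₁ * (16 * b * m ^ 2 * (m - c)) * x
          - 8 * m ^ 3 * (16 * b * m ^ 2 * (m - c)))
        0
        (4 * m ^ 2 * A₄ * (16 * b * m ^ 2 * (m - c)) ^ 2 * x ^ 2
          - 4 * m ^ 2 * x ^ 2 * b ^ 2 * A₁ ^ 4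
          - 4 * m * A₁ * b * A₁ ^ 2 * (16 * b * m ^ 2 * (m - c)) * x
          + 4 * m ^ 2 * A₃ * (16 * b * m ^ 2 * (m - c)) ^ 2 * x
          + 4 * m ^ 2 * A₂ * (16 * b * m ^ 2 * (m - c)) ^ 2
          - A₁ ^ 2 * (16 * b * m ^ 2 * (m - c)) ^ 2
          - 8 * m ^ 3 * b * A₁ ^ 2 * (16 * b * m ^ 2 * (m - c)))
        (mul_ne_zero (mul_ne_zero (by norm_num) (pow_ne_zero 2 hm0)) (pow_ne_zero 2 hx0)))
      rintro u ⟨P, ⟨hPSB, hFx⟩, rfl⟩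
      have := hroot P hPSB hFx
      simp only [Set.mem_setOf_eq]
      linear_combination this
  -- conclude
  have hcover : S \ B ⊆ ⋃ x ∈ {x : ℚ | ∃ p q : ℚ, (p ^ 2 + b * q ^ 2 + c) ^ 2 =
      A₄ * x ^ 4 + A₃ * x ^ 3 + A₂ * x ^ 2 + A₁ * x + m ^ 2},
      {P : ℚ × ℚ | P ∈ S \ B ∧ F P = x} :=
    fun P hP => Set.mem_biUnion (hmem P hP) ⟨hP, rfl⟩
  exact hS'inf (Set.Finite.subset (Set.Finite.biUnion hfin (fun x _ => hfib x)) hcover)
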